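/- There exists a bounded function K : ℝ → ℝ which is Riemann integrable on every bounded interval, and a continuous function f : [0,1] → ℝ, such that the composition K ∘ f is not Riemann integrable on [0,1]. -/
import Mathlib


open MeasureTheory

/-- Riemann integrability on a set via Lebesgue's criterion: bounded and the
set of discontinuity points within the set has measure zero. -/
def RiemannIntegrableOn (f : ℝ → ℝ) (A : Set ℝ) : Prop :=
  Bornology.IsBounded (f '' A) ∧ volume {x ∈ A | ¬ ContinuousWithinAt f A x} = 0

/-- There is a bounded function `K` that is Riemann integrable on every bounded
interval, and a continuous function `f` on `[0,1]`, such that `K ∘ f` is not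
Riemann integrable on `[0,1]`. -/
theorem stmt3 : ∃ (K : ℝ → ℝ) (f : ℝ → ℝ),
    (∃ C, ∀ t, |K t| ≤ C) ∧
    (∀ a b : ℝ, RiemannIntegrableOn K (Set.Icc a b)) ∧
    ContinuousOn f (Set.Icc 0 1) ∧
    ¬ RiemannIntegrableOn (K ∘ f) (Set.Icc 0 1) := by
  classical
  set S : Set ℝ := Set.Icc 0 1 ∩ Set.range ((↑) : ℚ → ℝ) with hSdef
  have hSvol : volume S = 0 :=
    ((Set.countable_range _).mono Set.inter_subset_right).measure_zero _
  obtain ⟨U, hSU, hUopen, hUvol⟩ :=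
    Set.exists_isOpen_lt_of_lt S (1/2) (by rw [hSvol]; norm_num)
  set D : Set ℝ := Set.Icc 0 1 \ U with hDdef
  have hDclosed : IsClosed D := isClosed_Icc.sdiff hUopen
  have hDvol : volume D ≠ 0 := by
    intro h0
    have h1 : volume (Set.Icc (0:ℝ) 1) ≤ volume D + volume U := by
      refine le_trans (measure_mono ?_) (measure_union_le _ _)
      intro x hx
      by_cases hxU : x ∈ U
      · exact Or.inr hxU
      · exact Or.inl ⟨hx, hxU⟩
    rw [Real.volume_Icc, h0, zero_add] at h1
    simp only [sub_zero, ENNReal.ofReal_one] at h1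
    exact absurd (h1.trans_lt hUvol) (by norm_num)
  have hDne : D.Nonempty := by
    rcases Set.eq_empty_or_nonempty D with h | h
    · exact absurd (by simp [h]) hDvol
    · exact h
  refine ⟨fun t => if t = 0 then 1 else 0, fun x => Metric.infDist x D, ⟨1, ?_⟩, ?_, ?_, ?_⟩
  · intro t; by_cases h : t = 0 <;> simp [h]
  · intro a b
    constructor
    · apply Metric.isBounded_Icc (0:ℝ) 1 |>.subset
      rintro _ ⟨t, -, rfl⟩
      by_cases h : t = 0 <;> simp [h]
    · refine measure_mono_null ?_ (measure_singleton (0:ℝ))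
      rintro x ⟨-, hx⟩
      by_contra hx0
      apply hx
      refine ContinuousAt.continuousWithinAt ?_
      have : (fun t : ℝ => if t = 0 then (1:ℝ) else 0) =ᶠ[nhds x] fun _ => (0:ℝ) := by
        filter_upwards [isOpen_ne.mem_nhds (by simpa using Set.mem_singleton_iff.not.mpr hx0)]
          with t ht
        simp [ht]
      exact continuousAt_const.congr this.symm
  · exact (Metric.continuous_infDist_pt D).continuousOn
  · rintro ⟨-, hvol⟩
    have hmem : ∀ x : ℝ, Metric.infDist x D = 0 ↔ x ∈ D := fun x =>
      ⟨fun h => (hDclosed.mem_iff_infDist_zero hDne).mpr h, fun h => Metric.infDist_zero_of_mem h⟩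
    -- every point of D is a discontinuity point
    have hsub : D ⊆ {x ∈ Set.Icc (0:ℝ) 1 | ¬ ContinuousWithinAt
        ((fun t => if t = 0 then (1:ℝ) else 0) ∘ fun x => Metric.infDist x D) (Set.Icc 0 1) x} := by
      intro x hxD
      refine ⟨hxD.1, fun hc => ?_⟩
      have hgx : ((fun t => if t = 0 then (1:ℝ) else 0) ∘ fun x => Metric.infDist x D) x = 1 := by
        simp [Function.comp, (hmem x).mpr hxD]
      have hball : Metric.ball (1:ℝ) (1/2) ∈ nhds (((fun t => if t = 0 then (1:ℝ) else 0) ∘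
          fun x => Metric.infDist x D) x) := by
        rw [hgx]; exact Metric.ball_mem_nhds _ (by norm_num)
      have := hc hball
      rw [Filter.mem_map, mem_nhdsWithin] at this
      obtain ⟨t, htopen, hxt, hts⟩ := this
      obtain ⟨ε, hε, hball2⟩ := Metric.isOpen_iff.mp htopen x hxt
      -- find a rational q in (0,1) ∩ ball x ε
      obtain ⟨hx0, hx1⟩ := hxD.1
      have : ∃ q : ℚ, (q:ℝ) ∈ Set.Icc (0:ℝ) 1 ∧ (q:ℝ) ∈ Metric.ball x ε := by
        by_cases h1 : x < 1
        · obtain ⟨q, hq1, hq2⟩ := exists_rat_btwn (lt_min h1 (lt_add_of_pos_right x hε))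
          refine ⟨q, ⟨le_of_lt (lt_of_le_of_lt hx0 hq1), le_of_lt (hq2.trans_le (min_le_left _ _))⟩, ?_⟩
          rw [Metric.mem_ball, Real.dist_eq, abs_lt]
          constructor <;> nlinarith [hq2.trans_le (min_le_right _ _)]
        · push_neg at h1
          have hx1' : x = 1 := le_antisymm hx1 h1
          obtain ⟨q, hq1, hq2⟩ := exists_rat_btwn (max_lt (by norm_num : (0:ℝ) < 1)
            (by linarith : x - ε < 1) : max 0 (x - ε) < 1)
          refine ⟨q, ⟨le_of_lt (lt_of_le_of_lt (le_max_left _ _) hq1),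
            le_of_lt (by linarith [hx1'])⟩, ?_⟩
          rw [Metric.mem_ball, Real.dist_eq, abs_lt]
          have := lt_of_le_of_lt (le_max_right 0 (x - ε)) hq1
          constructor <;> linarith
      obtain ⟨q, hqIcc, hqball⟩ := this
      have hqU : (q:ℝ) ∈ U := hSU ⟨hqIcc, ⟨q, rfl⟩⟩
      have hqD : (q:ℝ) ∉ D := fun h => h.2 hqU
      have hq0 : Metric.infDist (q:ℝ) D ≠ 0 := fun h => hqD ((hmem _).mp h)
      have := hts ⟨hball2 hqball, hqIcc⟩
      simp only [Set.mem_preimage, Function.comp, if_neg hq0, Metric.mem_ball] at this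
      rw [Real.dist_eq] at this
      norm_num at this
    exact hDvol (measure_mono_null hsub hvol)
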